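/- For all sufficiently large real x, with L = (log x)^{10}, D = exp((log log x)^3), R = x^{1/(3 log log x)}: every natural number n with 1 ≤ n ≤ x lies in at least one of the sets A₁, A₂, E, where E is the set of n ≤ x satisfying at least one of: (i) n ≤ x/L; (ii) all prime factors of n are ≤ R; (iii) d² divides n for some d > L; (iv) n is divisible by some d > D all of whose prime factors are ≤ L; (v) n = d·p₂·p₁ with all prime factors of d at most L and p₁, p₂ primes with R/L ≤ p₂ ≤ p₁ ≤ p₂·L; (vi) n = d·p₃·p₂·p₁ with p₁, p₂, p₃ primes satisfying R/L² ≤ p₃ ≤ p₂ ≤ p₁ ≤ p₃·L²; A₁ is the set of n ≤ x of the form n = d·p with all prime factors of d at most L, d ≤ D, p prime, and n > x/L; and A₂ is the set of n ≤ x of the form n = d·p·s with p a prime greater than L, all prime factors of d strictly less than p, and s either a prime or a product of two primes, all of whose prime factors exceed p·L. -/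
import Mathlib


open scoped BigOperators

/-- The scale `L = (log x)^10`. -/
noncomputable def Lx (x : ℝ) : ℝ := (Real.log x) ^ 10

/-- The scale `D = exp((log log x)^3)`. -/
noncomputable def Dx (x : ℝ) : ℝ := Real.exp ((Real.log (Real.log x)) ^ 3)

/-- The scale `R = x^(1/(3 log log x))`. -/
noncomputable def Rx (x : ℝ) : ℝ := x ^ (1 / (3 * Real.log (Real.log x)))

/-- Membership in the exceptional set `E`: `n` satisfies at least one of conditions
(i)--(vi). -/
def inE (x : ℝ) (n : ℕ) : Prop :=
  ((n : ℝ) ≤ x / Lx x) ∨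
  (∀ p : ℕ, p.Prime → p ∣ n → (p : ℝ) ≤ Rx x) ∨
  (∃ d : ℕ, Lx x < (d : ℝ) ∧ d ^ 2 ∣ n) ∨
  (∃ d : ℕ, Dx x < (d : ℝ) ∧ (∀ p : ℕ, p.Prime → p ∣ d → (p : ℝ) ≤ Lx x) ∧ d ∣ n) ∨
  (∃ d p₁ p₂ : ℕ, n = d * p₂ * p₁ ∧ (∀ p : ℕ, p.Prime → p ∣ d → (p : ℝ) ≤ Lx x) ∧
    p₁.Prime ∧ p₂.Prime ∧ Rx x / Lx x ≤ (p₂ : ℝ) ∧ p₂ ≤ p₁ ∧ (p₁ : ℝ) ≤ (p₂ : ℝ) * Lx x) ∨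
  (∃ d p₁ p₂ p₃ : ℕ, n = d * p₃ * p₂ * p₁ ∧ p₁.Prime ∧ p₂.Prime ∧ p₃.Prime ∧
    Rx x / (Lx x) ^ 2 ≤ (p₃ : ℝ) ∧ p₃ ≤ p₂ ∧ p₂ ≤ p₁ ∧ (p₁ : ℝ) ≤ (p₃ : ℝ) * (Lx x) ^ 2)

/-- Membership in the primary set `A₁`: `n = d * p` with `d` an `L`-smooth number of size
at most `D`, `p` prime, and `n > x / L`. -/
def inA1 (x : ℝ) (n : ℕ) : Prop :=
  x / Lx x < (n : ℝ) ∧ ∃ d p : ℕ, n = d * p ∧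
    (∀ q : ℕ, q.Prime → q ∣ d → (q : ℝ) ≤ Lx x) ∧ (d : ℝ) ≤ Dx x ∧ p.Prime

/-- Membership in the secondary set `A₂`: `n = d * p * s` with `p` a prime exceeding `L`,
all prime factors of `d` less than `p`, and `s` an almost prime (a prime or a product of two
primes) all of whose prime factors exceed `p * L`. -/
def inA2 (x : ℝ) (n : ℕ) : Prop :=
  ∃ d p s : ℕ, n = d * p * s ∧ p.Prime ∧ Lx x < (p : ℝ) ∧
    (∀ q : ℕ, q.Prime → q ∣ d → q < p) ∧
    (s.Prime ∨ ∃ q₁ q₂ : ℕ, q₁.Prime ∧ q₂.Prime ∧ s = q₁ * q₂) ∧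
    (∀ q : ℕ, q.Prime → q ∣ s → (p : ℝ) * Lx x < (q : ℝ))

lemma scales {x : ℝ} (hx : Real.exp (Real.exp 1000000) ≤ x) :
    1 ≤ Lx x ∧ Lx x ≤ Rx x := by
  have hx0 : (0:ℝ) < x := lt_of_lt_of_le (Real.exp_pos _) hx
  have hy : Real.exp 1000000 ≤ Real.log x := by
    calc Real.exp 1000000 = Real.log (Real.exp (Real.exp 1000000)) := (Real.log_exp _).symm
    _ ≤ Real.log x := by gcongr
  set y := Real.log x with hydef
  have hy0 : (0:ℝ) < y := lt_of_lt_of_le (Real.exp_pos _) hy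
  have hz : (1000000:ℝ) ≤ Real.log y := by
    calc (1000000:ℝ) = Real.log (Real.exp 1000000) := (Real.log_exp _).symm
    _ ≤ Real.log y := by gcongr
  set z := Real.log y with hzdef
  have hz0 : (0:ℝ) < z := lt_of_lt_of_le (by norm_num) hz
  have hyez : y = Real.exp z := (Real.exp_log hy0).symm
  have hL : Lx x = Real.exp (10 * z) := by
    rw [Lx, ← hydef, hyez, ← Real.exp_nat_mul]
    norm_num
  have hR : Rx x = Real.exp (y * (1 / (3 * z))) := by
    rw [Rx, Real.rpow_def_of_pos hx0, ← hydef, ← hzdef]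
  have hexpz : 30 * z ^ 2 ≤ Real.exp z := by
    have h6 : Real.exp z = (Real.exp (z / 6)) ^ 6 := by
      rw [← Real.exp_nat_mul]; ring_nf
    have hz6 : z / 6 ≤ Real.exp (z / 6) := by
      have := Real.add_one_le_exp (z / 6); linarith
    have hp : (z / 6) ^ 6 ≤ (Real.exp (z / 6)) ^ 6 :=
      pow_le_pow_left₀ (by positivity) hz6 6
    have h4 : (1000000:ℝ) ^ 4 ≤ z ^ 4 := pow_le_pow_left₀ (by norm_num) hz 4
    nlinarith [sq_nonneg z, hz0.le]
  constructor
  · rw [hL]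
    calc (1:ℝ) = Real.exp 0 := Real.exp_zero.symm
    _ ≤ _ := Real.exp_le_exp.mpr (by positivity)
  · rw [hL, hR]
    apply Real.exp_le_exp.mpr
    rw [mul_one_div, le_div_iff₀ (by positivity)]
    nlinarith [hexpz, hyez]

lemma max_prime {n : ℕ} (hn : n ≠ 0) {P : ℕ} (hP : P.Prime) (hPn : P ∣ n) :
    ∃ q, q.Prime ∧ q ∣ n ∧ ∀ p, p.Prime → p ∣ n → p ≤ q := by
  have hne : n.primeFactors.Nonempty := ⟨P, Nat.mem_primeFactors.mpr ⟨hP, hPn, hn⟩⟩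
  have hm := n.primeFactors.max'_mem hne
  rw [Nat.mem_primeFactors] at hm
  exact ⟨_, hm.1, hm.2.1, fun p hp hpn =>
    Finset.le_max' _ p (Nat.mem_primeFactors.mpr ⟨hp, hpn, hn⟩)⟩

theorem stmt7 : ∃ x₀ : ℝ, ∀ x : ℝ, x₀ ≤ x → ∀ n : ℕ, 1 ≤ n → (n : ℝ) ≤ x →
    inA1 x n ∨ inA2 x n ∨ inE x n := by
  refine ⟨Real.exp (Real.exp 1000000), fun x hx n hn hnx => ?_⟩
  obtain ⟨hL1, hLR⟩ := scales hx
  have hL0 : (0:ℝ) < Lx x := lt_of_lt_of_le one_pos hL1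
  by_cases h1 : (n : ℝ) ≤ x / Lx x
  · exact Or.inr (Or.inr (Or.inl h1))
  by_cases h2 : ∀ p : ℕ, p.Prime → p ∣ n → (p : ℝ) ≤ Rx x
  · exact Or.inr (Or.inr (Or.inr (Or.inl h2)))
  by_cases h3 : ∃ d : ℕ, Lx x < (d : ℝ) ∧ d ^ 2 ∣ n
  · exact Or.inr (Or.inr (Or.inr (Or.inr (Or.inl h3))))
  by_cases h4 : ∃ d : ℕ, Dx x < (d : ℝ) ∧ (∀ p : ℕ, p.Prime → p ∣ d → (p : ℝ) ≤ Lx x) ∧ d ∣ n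
  · exact Or.inr (Or.inr (Or.inr (Or.inr (Or.inr (Or.inl h4)))))
  push_neg at h1 h2 h3 h4
  have hn0 : n ≠ 0 := by omega
  -- square-free (above L) helper
  have hnsq : ∀ q : ℕ, Lx x < (q:ℝ) → ∀ m : ℕ, q ∣ m → m * q ∣ n → False := by
    intro q hq m hqm hmn
    obtain ⟨b, rfl⟩ := hqm
    exact h3 q hq (dvd_trans ⟨b, by ring⟩ hmn)
  obtain ⟨P, hPp, hPn, hPR⟩ := h2
  obtain ⟨q₁, hq₁p, hq₁n, hq₁max⟩ := max_prime hn0 hPp hPn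
  have hq₁R : Rx x < (q₁:ℝ) :=
    lt_of_lt_of_le hPR (by exact_mod_cast hq₁max P hPp hPn)
  have hq₁L : Lx x < (q₁:ℝ) := lt_of_le_of_lt hLR hq₁R
  obtain ⟨n₁, hn1⟩ : ∃ m, n = m * q₁ := ⟨n / q₁, (Nat.div_mul_cancel hq₁n).symm⟩
  have hn₁n : n₁ ∣ n := ⟨q₁, hn1⟩
  by_cases hsm1 : ∀ p : ℕ, p.Prime → p ∣ n₁ → (p : ℝ) ≤ Lx x
  · -- A1
    refine Or.inl ⟨h1, n₁, q₁, hn1, hsm1, ?_, hq₁p⟩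
    by_contra hD
    push_neg at hD
    exact h4 n₁ hD hsm1 hn₁n
  push_neg at hsm1
  obtain ⟨Q, hQp, hQn₁, hQL⟩ := hsm1
  have hn₁0 : n₁ ≠ 0 := fun h => hn0 (by simp [hn1, h])
  obtain ⟨q₂, hq₂p, hq₂n₁, hq₂max⟩ := max_prime hn₁0 hQp hQn₁
  have hq₂L : Lx x < (q₂:ℝ) :=
    lt_of_lt_of_le hQL (by exact_mod_cast hq₂max Q hQp hQn₁)
  have hq₂lt : q₂ < q₁ := by
    rcases lt_or_eq_of_le (hq₁max q₂ hq₂p (hq₂n₁.trans hn₁n)) with h | h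
    · exact h
    · exact absurd (hnsq q₁ hq₁L n₁ (h ▸ hq₂n₁) (hn1 ▸ dvd_refl n)) (by simp)
  obtain ⟨n₂, hn2⟩ : ∃ m, n₁ = m * q₂ := ⟨n₁ / q₂, (Nat.div_mul_cancel hq₂n₁).symm⟩
  have hn₂n₁ : n₂ ∣ n₁ := ⟨q₂, hn2⟩
  have hn₂q₂n : n₂ * q₂ ∣ n := by rw [← hn2]; exact hn₁n
  have hprimelt₂ : ∀ p : ℕ, p.Prime → p ∣ n₂ → p < q₂ := by
    intro p hp hpn₂
    rcases lt_or_eq_of_le (hq₂max p hp (hpn₂.trans hn₂n₁)) with h | h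
    · exact h
    · exact absurd (hnsq q₂ hq₂L n₂ (h ▸ hpn₂) hn₂q₂n) (by simp)
  by_cases hbig : (q₂:ℝ) * Lx x < (q₁:ℝ)
  · -- A2 with s = q₁
    refine Or.inr (Or.inl ⟨n₂, q₂, q₁, by rw [hn1, hn2], hq₂p, hq₂L, hprimelt₂,
      Or.inl hq₁p, ?_⟩)
    intro q hq hqq₁
    have hq' : q = q₁ := (Nat.prime_dvd_prime_iff_eq hq hq₁p).mp hqq₁
    subst hq'
    exact hbig
  push_neg at hbig
  by_cases hsm2 : ∀ p : ℕ, p.Prime → p ∣ n₂ → (p : ℝ) ≤ Lx x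
  · -- E (v)
    refine Or.inr (Or.inr (Or.inr (Or.inr (Or.inr (Or.inr (Or.inl
      ⟨n₂, q₁, q₂, by rw [hn1, hn2], hsm2, hq₁p, hq₂p, ?_, le_of_lt hq₂lt, hbig⟩))))))
    rw [div_le_iff₀ hL0]
    exact le_trans (le_of_lt hq₁R) hbig
  push_neg at hsm2
  obtain ⟨Q', hQ'p, hQ'n₂, hQ'L⟩ := hsm2
  have hn₂0 : n₂ ≠ 0 := fun h => hn₁0 (by simp [hn2, h])
  obtain ⟨q₃, hq₃p, hq₃n₂, hq₃max⟩ := max_prime hn₂0 hQ'p hQ'n₂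
  have hq₃L : Lx x < (q₃:ℝ) :=
    lt_of_lt_of_le hQ'L (by exact_mod_cast hq₃max Q' hQ'p hQ'n₂)
  have hq₃lt : q₃ < q₂ := by
    rcases lt_or_eq_of_le (hq₂max q₃ hq₃p (hq₃n₂.trans hn₂n₁)) with h | h
    · exact h
    · exact absurd (hnsq q₂ hq₂L n₂ (h ▸ hq₃n₂) hn₂q₂n) (by simp)
  obtain ⟨n₃, hn3⟩ : ∃ m, n₂ = m * q₃ := ⟨n₂ / q₃, (Nat.div_mul_cancel hq₃n₂).symm⟩
  have hn₃n₂ : n₃ ∣ n₂ := ⟨q₃, hn3⟩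
  have hprimelt₃ : ∀ p : ℕ, p.Prime → p ∣ n₃ → p < q₃ := by
    intro p hp hpn₃
    rcases lt_or_eq_of_le (hq₃max p hp (hpn₃.trans hn₃n₂)) with h | h
    · exact h
    · refine absurd (hnsq q₃ hq₃L n₃ (h ▸ hpn₃) ?_) (by simp)
      rw [← hn3]; exact hn₂n₁.trans hn₁n
  by_cases hb2 : (q₁:ℝ) ≤ (q₃:ℝ) * (Lx x) ^ 2
  · -- E (vi)
    refine Or.inr (Or.inr (Or.inr (Or.inr (Or.inr (Or.inr (Or.inr
      ⟨n₃, q₁, q₂, q₃, by rw [hn1, hn2, hn3], hq₁p, hq₂p, hq₃p, ?_,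
        le_of_lt hq₃lt, le_of_lt hq₂lt, hb2⟩))))))
    rw [div_le_iff₀ (by positivity)]
    exact le_trans (le_of_lt hq₁R) hb2
  push_neg at hb2
  -- A2 with s = q₂ * q₁
  have hq₃Lq₂ : (q₃:ℝ) * Lx x < (q₂:ℝ) := by nlinarith
  have hq₃Lq₁ : (q₃:ℝ) * Lx x < (q₁:ℝ) := by nlinarith [hq₃L, hL1]
  refine Or.inr (Or.inl ⟨n₃, q₃, q₂ * q₁, by rw [hn1, hn2, hn3]; ring, hq₃p, hq₃L,
    hprimelt₃, Or.inr ⟨q₂, q₁, hq₂p, hq₁p, rfl⟩, ?_⟩)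
  intro q hq hqdvd
  rcases (Nat.Prime.dvd_mul hq).mp hqdvd with h | h
  · have hq' : q = q₂ := (Nat.prime_dvd_prime_iff_eq hq hq₂p).mp h
    subst hq'; exact hq₃Lq₂
  · have hq' : q = q₁ := (Nat.prime_dvd_prime_iff_eq hq hq₁p).mp h
    subst hq'; exact hq₃Lq₁
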